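/- arXiv:2306.07819 — 3 statements merged into one kernel-verified Lean document; each statement's English description precedes it below -/
import Mathlib

section
/- KR-U confidence envelope in the pre-ordered setting (Theorem 3.2): In the pre-ordered setting with threshold s ∈ (0,1], for all δ ∈ (0,1) and λ ∈ [s,1), with probability at least 1 − δ, simultaneously for all k ∈ {1,...,m}: FDP(R_k) ≤ 1 ∧ min_{a ∈ ℕ, a ≥ 1} { [ log(1/δ_a) / ( a log(1 + (1 − δ_a^{B/a})/B) ) ] · ( a + (s/(1−λ)) Σ_{i=1}^k 1{p_{π(i)} > λ} ) / ( 1 ∨ Σ_{i=1}^k 1{p_{π(i)} ≤ s} ) }, where δ_a = δ/(κ a²) and B = s/(1−λ). -/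
set_option maxHeartbeats 1000000

open MeasureTheory ProbabilityTheory Real Set
open scoped ENNReal

section KRUaux

lemma KRU_iIndepFun_comp_equiv {Ω : Type*} [MeasureSpace Ω]
    {ι ι' : Type*} {β : Type*} [mβ : MeasurableSpace β]
    {f : ι → Ω → β} (h : iIndepFun f ℙ) (e : ι' ≃ ι) :
    iIndepFun (fun i => f (e i)) ℙ := by
  classical
  rw [iIndepFun_iff] at h ⊢
  intro S g hg
  have key := h (S.image e) (f' := fun j => g (e.symm j)) ?_
  · have h1 : (⋂ j ∈ S.image e, g (e.symm j)) = ⋂ i ∈ S, g i := by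
      ext ω
      simp only [Set.mem_iInter, Finset.mem_image]
      constructor
      · intro hh i hi
        have := hh (e i) ⟨i, hi, rfl⟩
        simpa using this
      · rintro hh j ⟨i, hi, rfl⟩
        simpa using hh i hi
    have h2 : (∏ j ∈ S.image e, ℙ (g (e.symm j))) = ∏ i ∈ S, ℙ (g i) := by
      rw [Finset.prod_image (fun a _ b _ hab => e.injective hab)]
      simp
    rw [h1, h2] at key
    exact key
  · intro j hj
    rcases Finset.mem_image.1 hj with ⟨i, hi, rfl⟩
    simpa using hg i hi

lemma KRU_lintegral_prod_indep {Ω : Type*} [MeasureSpace Ω] [IsProbabilityMeasure (ℙ : Measure Ω)]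
    {ι : Type*} {q : ι → Ω → ℝ≥0∞}
    (hq : iIndepFun q ℙ) (hqm : ∀ i, Measurable (q i))
    (hq1 : ∀ i, ∫⁻ ω, q i ω ∂ℙ = 1) (U : Finset ι) :
    ∫⁻ ω, ∏ i ∈ U, q i ω ∂ℙ = 1 := by
  classical
  induction U using Finset.induction with
  | empty => simp
  | @insert a U hnotmem ih =>
    have hindep : IndepFun (∏ j ∈ U, q j) (q a) ℙ :=
      hq.indepFun_finset_prod_of_notMem hqm hnotmem
    have hMm : Measurable (∏ j ∈ U, q j) := by
      have : Measurable fun ω => ∏ j ∈ U, q j ω := Finset.measurable_prod _ (fun i _ => hqm i)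
      simpa [Finset.prod_fn] using this
    calc ∫⁻ ω, ∏ i ∈ insert a U, q i ω ∂ℙ
        = ∫⁻ ω, (∏ j ∈ U, q j) ω * q a ω ∂ℙ := by
          congr 1; ext ω
          rw [Finset.prod_insert hnotmem]
          simp [mul_comm]
      _ = (∫⁻ ω, (∏ j ∈ U, q j) ω ∂ℙ) * ∫⁻ ω, q a ω ∂ℙ :=
          lintegral_mul_eq_lintegral_mul_lintegral_of_indepFun hMm (hqm a) hindep
      _ = 1 := by
          rw [hq1 a, mul_one]
          simpa using ih

lemma KRU_ville {Ω : Type*} [MeasureSpace Ω] [IsProbabilityMeasure (ℙ : Measure Ω)]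
    (m : ℕ) (r : Fin m → Ω → ℝ≥0∞)
    (hind : iIndepFun r ℙ) (hrm : ∀ i, Measurable (r i))
    (hr1 : ∀ i, ∫⁻ ω, r i ω ∂ℙ = 1) (t : ℝ≥0∞) (ht : 1 < t) :
    ℙ {ω | ∃ k ∈ Finset.Icc 1 m,
        t ≤ ∏ i ∈ Finset.univ.filter (fun i : Fin m => (i : ℕ) < k), r i ω} ≤ t⁻¹ := by
  classical
  set M : ℕ → Ω → ℝ≥0∞ :=
    fun k ω => ∏ i ∈ Finset.univ.filter (fun i : Fin m => (i : ℕ) < k), r i ω with hM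
  have hMmeas : ∀ k, Measurable (M k) :=
    fun k => Finset.measurable_prod _ (fun i _ => hrm i)
  have hM0 : ∀ ω, M 0 ω = 1 := by
    intro ω; simp [hM]
  have hMfull : ∀ ω, M m ω = ∏ i : Fin m, r i ω := by
    intro ω
    have h : Finset.univ.filter (fun i : Fin m => (i : ℕ) < m) = Finset.univ :=
      Finset.filter_true_of_mem (fun i _ => i.isLt)
    simp only [hM, h]
  have hfull1 : ∫⁻ ω, M m ω ∂ℙ = 1 := by
    simp only [hMfull]
    exact KRU_lintegral_prod_indep hind hrm hr1 Finset.univ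
  set A : ℕ → Set Ω :=
    fun k => {ω | t ≤ M k ω} ∩ ⋂ j, ⋂ (_ : j < k), {ω | M j ω < t} with hA
  have hmemA : ∀ k ω, ω ∈ A k ↔ (t ≤ M k ω ∧ ∀ j < k, M j ω < t) := by
    intro k ω; simp [hA, Set.mem_iInter]
  have hAmeas : ∀ k, MeasurableSet (A k) := by
    intro k
    refine (measurableSet_le measurable_const (hMmeas k)).inter ?_
    exact MeasurableSet.iInter fun j => MeasurableSet.iInter fun _ =>
      measurableSet_lt (hMmeas j) measurable_const
  have huniq : ∀ ω k1 k2, ω ∈ A k1 → ω ∈ A k2 → k1 = k2 := by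
    intro ω k1 k2 h1 h2
    rw [hmemA] at h1 h2
    rcases lt_trichotomy k1 k2 with h | h | h
    · exact absurd h1.1 (not_le.2 (h2.2 k1 h))
    · exact h
    · exact absurd h2.1 (not_le.2 (h1.2 k2 h))
  have hcover : {ω | ∃ k ∈ Finset.Icc 1 m,
      t ≤ ∏ i ∈ Finset.univ.filter (fun i : Fin m => (i : ℕ) < k), r i ω}
      ⊆ ⋃ k ∈ Finset.Icc 1 m, A k := by
    intro ω hω
    obtain ⟨k, hk, hTk⟩ := hω
    have hPk : t ≤ M k ω := hTk
    have hex : ∃ j, t ≤ M j ω := ⟨k, hPk⟩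
    set k0 := Nat.find hex with hk0
    have hspec : t ≤ M k0 ω := Nat.find_spec hex
    have hmin : ∀ j < k0, M j ω < t := by
      intro j hj
      exact lt_of_not_ge (Nat.find_min hex hj)
    have hk0le : k0 ≤ k := Nat.find_min' hex hPk
    have hk0pos : 1 ≤ k0 := by
      rcases Nat.eq_zero_or_pos k0 with h0 | h0
      · rw [h0] at hspec
        rw [hM0] at hspec
        exact absurd hspec (not_le.2 ht)
      · exact h0
    refine Set.mem_biUnion ?_ ((hmemA k0 ω).2 ⟨hspec, hmin⟩)
    exact Finset.mem_Icc.2 ⟨hk0pos, hk0le.trans (Finset.mem_Icc.1 hk).2⟩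
  have key : ∀ k ∈ Finset.Icc 1 m,
      t * ℙ (A k) ≤ ∫⁻ ω, (A k).indicator (M m) ω ∂ℙ := by
    intro k hk
    obtain ⟨hk1, hkm⟩ := Finset.mem_Icc.1 hk
    set Sk : Finset (Fin m) := Finset.univ.filter (fun i : Fin m => (i : ℕ) < k) with hSk
    set Tk : Finset (Fin m) := Finset.univ.filter (fun i : Fin m => ¬ (i : ℕ) < k) with hTk
    have hdisj : Disjoint Sk Tk := Finset.disjoint_filter_filter_not _ _ _
    set X : Ω → (Sk → ℝ≥0∞) := fun ω (i : Sk) => r i ω with hX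
    set Y : Ω → (Tk → ℝ≥0∞) := fun ω (i : Tk) => r i ω with hY
    have hXY : IndepFun X Y ℙ := hind.indepFun_finset Sk Tk hdisj hrm
    have hXmeas : Measurable X := measurable_pi_lambda _ (fun i => hrm i)
    have hYmeas : Measurable Y := measurable_pi_lambda _ (fun i => hrm i)
    set mm : ℕ → (Sk → ℝ≥0∞) → ℝ≥0∞ :=
      fun j v => ∏ i ∈ Sk.attach, if ((i : Fin m) : ℕ) < j then v i else 1 with hmm
    have hmm_meas : ∀ j, Measurable (mm j) := by
      intro j
      apply Finset.measurable_prod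
      intro i _
      by_cases hc : ((i : Fin m) : ℕ) < j
      · simp only [if_pos hc]; exact measurable_pi_apply i
      · simp only [if_neg hc]; exact measurable_const
    have hmmX : ∀ j ≤ k, ∀ ω, mm j (X ω) = M j ω := by
      intro j hj ω
      rw [hmm, hM]
      simp only [hX]
      rw [Finset.prod_attach Sk (fun i => if ((i : Fin m) : ℕ) < j then r i ω else 1)]
      rw [← Finset.prod_filter]
      congr 1
      rw [hSk, Finset.filter_filter]
      apply Finset.filter_congr
      intro i _
      constructor
      · exact fun h => h.2
      · exact fun h => ⟨lt_of_lt_of_le h hj, h⟩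
    set Cset : Set (Sk → ℝ≥0∞) :=
      {v | t ≤ mm k v} ∩ ⋂ j, ⋂ (_ : j < k), {v | mm j v < t} with hCset
    have hCmeas : MeasurableSet Cset := by
      refine (measurableSet_le measurable_const (hmm_meas k)).inter ?_
      exact MeasurableSet.iInter fun j => MeasurableSet.iInter fun _ =>
        measurableSet_lt (hmm_meas j) measurable_const
    have hCX : ∀ ω, X ω ∈ Cset ↔ ω ∈ A k := by
      intro ω
      rw [hmemA]
      simp only [hCset, Set.mem_inter_iff, Set.mem_setOf_eq, Set.mem_iInter]
      constructor
      · rintro ⟨h1, h2⟩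
        refine ⟨by rwa [hmmX k le_rfl ω] at h1, fun j hj => ?_⟩
        have := h2 j hj
        rwa [hmmX j (le_of_lt hj) ω] at this
      · rintro ⟨h1, h2⟩
        refine ⟨by rwa [hmmX k le_rfl ω], fun j hj => ?_⟩
        rw [hmmX j (le_of_lt hj) ω]
        exact h2 j hj
    set F : (Sk → ℝ≥0∞) → ℝ≥0∞ := fun v => Cset.indicator (mm k) v with hF
    have hFmeas : Measurable F := (hmm_meas k).indicator hCmeas
    set G : (Tk → ℝ≥0∞) → ℝ≥0∞ := fun w => ∏ i ∈ Tk.attach, w i with hG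
    have hGmeas : Measurable G :=
      Finset.measurable_prod _ (fun i _ => measurable_pi_apply i)
    have hFX : ∀ ω, F (X ω) = (A k).indicator (M k) ω := by
      intro ω
      simp only [hF]
      by_cases hω : ω ∈ A k
      · rw [Set.indicator_of_mem ((hCX ω).2 hω), Set.indicator_of_mem hω, hmmX k le_rfl ω]
      · rw [Set.indicator_of_notMem (fun hc => hω ((hCX ω).1 hc)),
          Set.indicator_of_notMem hω]
    have hGY : ∀ ω, G (Y ω) = ∏ i ∈ Tk, r i ω := by
      intro ω
      rw [hG]
      simp only [hY]
      exact Finset.prod_attach Tk (fun i => r i ω)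
    have hprod : ∀ ω, M k ω * (∏ i ∈ Tk, r i ω) = M m ω := by
      intro ω
      simp only [hM]
      rw [← Finset.prod_union hdisj]
      congr 1
      rw [hSk, hTk, Finset.filter_union_filter_not_eq]
      exact (Finset.filter_true_of_mem (fun i _ => i.isLt)).symm
    have hIndepFG : IndepFun (F ∘ X) (G ∘ Y) ℙ := hXY.comp hFmeas hGmeas
    have hGint : ∫⁻ ω, G (Y ω) ∂ℙ = 1 := by
      have h : ∀ ω, G (Y ω) = ∏ i ∈ Tk, r i ω := hGY
      simp only [h]
      exact KRU_lintegral_prod_indep hind hrm hr1 Tk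
    calc t * ℙ (A k)
        = ∫⁻ ω, (A k).indicator (fun _ => t) ω ∂ℙ := by
          rw [lintegral_indicator_const (hAmeas k)]
      _ ≤ ∫⁻ ω, (A k).indicator (M k) ω ∂ℙ := by
          apply lintegral_mono
          intro ω
          by_cases hω : ω ∈ A k
          · rw [Set.indicator_of_mem hω, Set.indicator_of_mem hω]
            exact ((hmemA k ω).1 hω).1
          · rw [Set.indicator_of_notMem hω, Set.indicator_of_notMem hω]
      _ = ∫⁻ ω, F (X ω) ∂ℙ := by
          apply lintegral_congr
          intro ω
          rw [hFX ω]
      _ = (∫⁻ ω, F (X ω) ∂ℙ) * ∫⁻ ω, G (Y ω) ∂ℙ := by rw [hGint, mul_one]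
      _ = ∫⁻ ω, F (X ω) * G (Y ω) ∂ℙ :=
          (lintegral_mul_eq_lintegral_mul_lintegral_of_indepFun''
            (hFmeas.comp hXmeas).aemeasurable (hGmeas.comp hYmeas).aemeasurable hIndepFG).symm
      _ = ∫⁻ ω, (A k).indicator (M m) ω ∂ℙ := by
          apply lintegral_congr
          intro ω
          rw [hFX ω, hGY ω]
          by_cases hω : ω ∈ A k
          · rw [Set.indicator_of_mem hω, Set.indicator_of_mem hω, hprod ω]
          · rw [Set.indicator_of_notMem hω, Set.indicator_of_notMem hω, zero_mul]
  have hsum_le : ∑ k ∈ Finset.Icc 1 m, ∫⁻ ω, (A k).indicator (M m) ω ∂ℙ ≤ 1 := by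
    rw [← lintegral_finset_sum _ (fun k _ => (hMmeas m).indicator (hAmeas k))]
    rw [← hfull1]
    apply lintegral_mono
    intro ω
    show ∑ k ∈ Finset.Icc 1 m, (A k).indicator (M m) ω ≤ M m ω
    by_cases hex : ∃ k ∈ Finset.Icc 1 m, ω ∈ A k
    · obtain ⟨k0, hk0, hA0⟩ := hex
      have heq : ∑ k ∈ Finset.Icc 1 m, (A k).indicator (M m) ω
          = (A k0).indicator (M m) ω := by
        apply Finset.sum_eq_single_of_mem k0 hk0
        intro b hb hne
        have hnb : ω ∉ A b := fun hc => hne (huniq ω b k0 hc hA0)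
        rw [Set.indicator_of_notMem hnb]
      rw [heq]
      exact Set.indicator_le_self _ _ ω
    · push_neg at hex
      have heq : ∑ k ∈ Finset.Icc 1 m, (A k).indicator (M m) ω = 0 := by
        apply Finset.sum_eq_zero
        intro b hb
        rw [Set.indicator_of_notMem (hex b hb)]
      rw [heq]
      exact zero_le
  have hmain : t * ℙ {ω | ∃ k ∈ Finset.Icc 1 m,
      t ≤ ∏ i ∈ Finset.univ.filter (fun i : Fin m => (i : ℕ) < k), r i ω} ≤ 1 := by
    calc t * ℙ {ω | ∃ k ∈ Finset.Icc 1 m,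
          t ≤ ∏ i ∈ Finset.univ.filter (fun i : Fin m => (i : ℕ) < k), r i ω}
        ≤ t * ℙ (⋃ k ∈ Finset.Icc 1 m, A k) :=
          mul_le_mul_right (measure_mono hcover) t
      _ ≤ t * ∑ k ∈ Finset.Icc 1 m, ℙ (A k) :=
          mul_le_mul_right (measure_biUnion_finset_le _ _) t
      _ = ∑ k ∈ Finset.Icc 1 m, t * ℙ (A k) := Finset.mul_sum _ _ _
      _ ≤ ∑ k ∈ Finset.Icc 1 m, ∫⁻ ω, (A k).indicator (M m) ω ∂ℙ :=
          Finset.sum_le_sum key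
      _ ≤ 1 := hsum_le
  rw [ENNReal.le_inv_iff_mul_le]
  calc ℙ _ * t = t * ℙ _ := mul_comm _ _
    _ ≤ 1 := hmain

lemma KRU_measurable_g {s lam x ν : ℝ} :
    Measurable (fun u : ℝ => ENNReal.ofReal (if u ≤ s then x else if lam < u then ν else 1)) := by
  apply ENNReal.measurable_ofReal.comp
  apply Measurable.ite (measurableSet_le measurable_id measurable_const) measurable_const
  exact Measurable.ite (measurableSet_lt measurable_const measurable_id) measurable_const
    measurable_const

lemma KRU_lintegral_g {s lam x ν : ℝ} (hs0 : 0 < s) (hsl : s ≤ lam) (hlam1 : lam < 1)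
    (hx : 0 ≤ x) (hν : 0 ≤ ν) (hsum : x * s + (lam - s) + ν * (1 - lam) = 1) :
    ∫⁻ u in Icc (0:ℝ) 1, ENNReal.ofReal (if u ≤ s then x else if lam < u then ν else 1) = 1 := by
  have hs1 : s ≤ 1 := hsl.trans hlam1.le
  have hIcc : Icc (0:ℝ) 1 = Icc 0 s ∪ Ioc s 1 := (Set.Icc_union_Ioc_eq_Icc hs0.le hs1).symm
  have hIoc : Ioc s (1:ℝ) = Ioc s lam ∪ Ioc lam 1 := (Set.Ioc_union_Ioc_eq_Ioc hsl hlam1.le).symm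
  have hd1 : Disjoint (Icc (0:ℝ) s) (Ioc s 1) := by
    rw [Set.disjoint_left]; rintro u hu hu2; exact absurd hu.2 (not_le.2 hu2.1)
  have hd2 : Disjoint (Ioc s lam) (Ioc lam (1:ℝ)) := by
    rw [Set.disjoint_left]; rintro u hu hu2; exact absurd hu.2 (not_le.2 hu2.1)
  rw [hIcc, lintegral_union (measurableSet_Ioc) hd1,
    hIoc, lintegral_union (measurableSet_Ioc) hd2]
  have h1 : ∫⁻ u in Icc (0:ℝ) s,
      ENNReal.ofReal (if u ≤ s then x else if lam < u then ν else 1)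
      = ENNReal.ofReal x * ENNReal.ofReal s := by
    rw [setLIntegral_congr_fun_ae measurableSet_Icc
      (ae_of_all _ (fun u hu => by simp [hu.2] : ∀ u ∈ Icc (0:ℝ) s, _ = ENNReal.ofReal x))]
    rw [setLIntegral_const, Real.volume_Icc]
    simp
  have h2 : ∫⁻ u in Ioc s lam,
      ENNReal.ofReal (if u ≤ s then x else if lam < u then ν else 1)
      = ENNReal.ofReal (lam - s) := by
    rw [setLIntegral_congr_fun_ae measurableSet_Ioc
      (ae_of_all _ (fun u hu => by
        simp [not_le.2 hu.1, not_lt.2 hu.2] : ∀ u ∈ Ioc s lam, _ = ENNReal.ofReal 1))]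
    rw [setLIntegral_const, Real.volume_Ioc]
    simp
  have h3 : ∫⁻ u in Ioc lam 1,
      ENNReal.ofReal (if u ≤ s then x else if lam < u then ν else 1)
      = ENNReal.ofReal ν * ENNReal.ofReal (1 - lam) := by
    rw [setLIntegral_congr_fun_ae measurableSet_Ioc
      (ae_of_all _ (fun u hu => by
        simp [not_le.2 (hsl.trans_lt hu.1), hu.1] : ∀ u ∈ Ioc lam (1:ℝ), _ = ENNReal.ofReal ν))]
    rw [setLIntegral_const, Real.volume_Ioc]
  rw [h1, h2, h3, ← ENNReal.ofReal_mul hx, ← ENNReal.ofReal_mul hν,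
    ← ENNReal.ofReal_add (by linarith) (mul_nonneg hν (by linarith)),
    ← ENNReal.ofReal_add (mul_nonneg hx hs0.le) (by nlinarith),
    show x * s + (lam - s + ν * (1 - lam)) = 1 by linarith, ENNReal.ofReal_one]

lemma KRU_basel {δ : ℝ} (hδ0 : 0 < δ) :
    ∑' a : {n : ℕ // 1 ≤ n}, ENNReal.ofReal (δ / ((Real.pi ^ 2 / 6) * ((a : ℕ) : ℝ) ^ 2))
      = ENNReal.ofReal δ := by
  have hκ : (0:ℝ) < Real.pi ^ 2 / 6 := by positivity
  set f : ℕ → ℝ := fun n => δ / ((Real.pi ^ 2 / 6) * (n : ℝ) ^ 2) with hf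
  have hfe : ∀ n : ℕ, f n = (δ / (Real.pi ^ 2 / 6)) * ((1:ℝ) / (n:ℝ) ^ 2) := by
    intro n
    rw [hf]
    by_cases hn : (n:ℝ) = 0
    · simp [hn]
    · field_simp
  have hsum : HasSum f δ := by
    have h0 : HasSum (fun n : ℕ => (δ / (Real.pi ^ 2 / 6)) * ((1:ℝ) / (n:ℝ) ^ 2))
        ((δ / (Real.pi ^ 2 / 6)) * (Real.pi ^ 2 / 6)) := hasSum_zeta_two.mul_left _
    have h1 : (δ / (Real.pi ^ 2 / 6)) * (Real.pi ^ 2 / 6) = δ := by field_simp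
    rw [h1] at h0
    exact h0.congr_fun (fun n => hfe n)
  have hsupp : Function.support f ⊆ {n : ℕ | 1 ≤ n} := by
    intro n hn
    simp only [Set.mem_setOf_eq]
    by_contra h
    push_neg at h
    interval_cases n
    · apply hn
      simp [hf]
  have hsub : HasSum (fun a : {n : ℕ // 1 ≤ n} => f a) δ :=
    (hasSum_subtype_iff_of_support_subset hsupp).2 hsum
  have hnn : ∀ a : {n : ℕ // 1 ≤ n}, 0 ≤ f a := by
    intro a
    have : (0:ℝ) < ((a:ℕ):ℝ) := by exact_mod_cast a.2
    rw [hf]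
    positivity
  rw [← ENNReal.ofReal_tsum_of_nonneg hnn hsub.summable, hsub.tsum_eq]

end KRUaux

/-- The false discovery proportion of a rejection set `R` with respect to the set `H0`
of true nulls: `|R ∩ H0| / (|R| ∨ 1)`. -/
noncomputable def FDP {m : ℕ} (H0 R : Finset (Fin m)) : ℝ :=
  ((R ∩ H0).card : ℝ) / max R.card 1

/-- The KR-type constant `log(1/δ_a) / (a log(1 + (1 − δ_a^{B/a})/B))`
with `δ_a = δ/(κ a²)`, `κ = π²/6`. -/
noncomputable def KRconstPre (δ B : ℝ) (a : ℕ) : ℝ :=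
  Real.log (1 / (δ / ((Real.pi ^ 2 / 6) * (a : ℝ) ^ 2)))
    / ((a : ℝ) * Real.log (1 + (1 - (δ / ((Real.pi ^ 2 / 6) * (a : ℝ) ^ 2)) ^ (B / (a : ℝ))) / B))

/-- KR-U confidence envelope in the pre-ordered setting (Theorem 3.2). -/
theorem KRU_envelope_preordered
    {Ω : Type*} [MeasureSpace Ω] [IsProbabilityMeasure (ℙ : Measure Ω)]
    (m : ℕ) (p : Fin m → Ω → ℝ) (H0 : Finset (Fin m))
    (perm : Equiv.Perm (Fin m)) (s lam : ℝ) (hs : s ∈ Set.Ioc (0:ℝ) 1)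
    (hlam : lam ∈ Set.Ico s 1)
    (hval : ∀ i ω, p i ω ∈ Set.Icc (0:ℝ) 1)
    (hmeas : ∀ i, Measurable (p i))
    (hindep : iIndepFun p ℙ)
    (hnull : ∀ i ∈ H0, Measure.map (p i) ℙ = volume.restrict (Set.Icc (0:ℝ) 1))
    (δ : ℝ) (hδ : δ ∈ Set.Ioo (0:ℝ) 1) :
    1 - δ ≤ (ℙ {ω | ∀ k ∈ Finset.Icc 1 m,
        FDP H0 ((Finset.univ.filter
            (fun i : Fin m => (i : ℕ) < k ∧ p (perm i) ω ≤ s)).image perm) ≤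
          min 1 (⨅ a : {n : ℕ // 1 ≤ n},
            KRconstPre δ (s / (1 - lam)) (a : ℕ)
              * (((a : ℕ) : ℝ) + (s / (1 - lam)) * ((Finset.univ.filter
                    (fun i : Fin m => (i : ℕ) < k ∧ lam < p (perm i) ω)).card : ℝ))
              / ((max 1 ((Finset.univ.filter
                    (fun i : Fin m => (i : ℕ) < k ∧ p (perm i) ω ≤ s)).card) : ℕ) : ℝ))}).toReal := by
  classical
  obtain ⟨hs0, hs1⟩ := hs
  obtain ⟨hsl, hlam1⟩ := hlam
  obtain ⟨hδ0, hδ1⟩ := hδ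
  haveI : Nonempty {n : ℕ // 1 ≤ n} := ⟨⟨1, le_refl 1⟩⟩
  have hκ1 : (1:ℝ) < Real.pi ^ 2 / 6 := by nlinarith [Real.pi_gt_three]
  set B : ℝ := s / (1 - lam) with hB
  have hBpos : 0 < B := div_pos hs0 (by linarith)
  set δa : ℕ → ℝ := fun a => δ / ((Real.pi ^ 2 / 6) * (a : ℝ) ^ 2) with hδa
  set ν : ℕ → ℝ := fun a => δa a ^ (B / (a : ℝ)) with hν
  set x : ℕ → ℝ := fun a => 1 + (1 - ν a) / B with hx
  set g : ℕ → ℝ → ℝ≥0∞ :=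
    fun a u => ENNReal.ofReal (if u ≤ s then x a else if lam < u then ν a else 1) with hg
  set q : ℕ → Fin m → Ω → ℝ≥0∞ :=
    fun a j ω => if j ∈ H0 then g a (p j ω) else 1 with hq
  -- basic facts
  have hacast : ∀ a : ℕ, 1 ≤ a → (1:ℝ) ≤ (a:ℝ) := fun a ha => by exact_mod_cast ha
  have hδa0 : ∀ a : ℕ, 1 ≤ a → 0 < δa a := by
    intro a ha
    have h1 := hacast a ha
    exact div_pos hδ0 (by nlinarith)
  have hδa1 : ∀ a : ℕ, 1 ≤ a → δa a < 1 := by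
    intro a ha
    have h1 := hacast a ha
    rw [hδa]
    rw [div_lt_one (by nlinarith)]
    nlinarith
  have hν0 : ∀ a : ℕ, 1 ≤ a → 0 < ν a := by
    intro a ha
    exact Real.rpow_pos_of_pos (hδa0 a ha) _
  have hν1 : ∀ a : ℕ, 1 ≤ a → ν a < 1 := by
    intro a ha
    have h1 := hacast a ha
    exact Real.rpow_lt_one (hδa0 a ha).le (hδa1 a ha) (div_pos hBpos (by linarith))
  have hx1 : ∀ a : ℕ, 1 ≤ a → 1 < x a := by
    intro a ha
    have h2 := hν1 a ha
    have h3 : 0 < (1 - ν a) / B := div_pos (by linarith) hBpos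
    rw [hx]
    linarith
  have hinvgt : ∀ a : ℕ, 1 ≤ a → (1:ℝ) < 1 / δa a := by
    intro a ha
    rw [one_div]
    exact (one_lt_inv₀ (hδa0 a ha)).2 (hδa1 a ha)
  have hgmeas : ∀ a : ℕ, Measurable (g a) := fun a => KRU_measurable_g
  have hqmeas : ∀ (a : ℕ) (j : Fin m), Measurable (q a j) := by
    intro a j
    by_cases hj : j ∈ H0
    · simp only [hq, if_pos hj]
      exact (hgmeas a).comp (hmeas j)
    · simp only [hq, if_neg hj]
      exact measurable_const
  have hqint : ∀ a : ℕ, 1 ≤ a → ∀ j : Fin m, ∫⁻ ω, q a j ω ∂ℙ = 1 := by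
    intro a ha j
    by_cases hj : j ∈ H0
    · simp only [hq, if_pos hj]
      rw [← lintegral_map (hgmeas a) (hmeas j), hnull j hj]
      have hsB : (1 - ν a) / B * s = (1 - ν a) * (1 - lam) := by
        rw [hB]
        field_simp
      apply KRU_lintegral_g hs0 hsl hlam1 (by have := hx1 a ha; linarith)
        (by have := hν0 a ha; linarith)
      have h2 := hν1 a ha
      rw [hx]
      linear_combination hsB
    · simp only [hq, if_neg hj]
      simp
  have hind_q : ∀ a : ℕ, iIndepFun (q a) ℙ := by
    intro a
    have := hindep.comp (fun j (u : ℝ) => if j ∈ H0 then g a u else 1)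
      (fun j => by
        by_cases hj : j ∈ H0
        · simp only [if_pos hj]; exact hgmeas a
        · simp only [if_neg hj]; exact measurable_const)
    exact this
  have hind_r : ∀ a : ℕ,
      iIndepFun (fun i : Fin m => q a (perm i)) ℙ :=
    fun a => KRU_iIndepFun_comp_equiv (hind_q a) (perm : Fin m ≃ Fin m)
  -- bad events
  set bad : ℕ → Set Ω := fun a => {ω | ∃ k ∈ Finset.Icc 1 m,
    ENNReal.ofReal (1 / δa a) ≤
      ∏ i ∈ Finset.univ.filter (fun i : Fin m => (i : ℕ) < k), q a (perm i) ω} with hbaddef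
  have hbad : ∀ a : ℕ, 1 ≤ a → ℙ (bad a) ≤ ENNReal.ofReal (δa a) := by
    intro a ha
    have ht : (1:ℝ≥0∞) < ENNReal.ofReal (1 / δa a) := by
      rw [ENNReal.one_lt_ofReal]
      exact hinvgt a ha
    have hv := KRU_ville m (fun i => q a (perm i)) (hind_r a)
      (fun i => hqmeas a (perm i)) (fun i => hqint a ha (perm i))
      (ENNReal.ofReal (1 / δa a)) ht
    have hinv : (ENNReal.ofReal (1 / δa a))⁻¹ = ENNReal.ofReal (δa a) := by
      rw [one_div, ENNReal.ofReal_inv_of_pos (hδa0 a ha), inv_inv]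
    rw [← hinv]
    exact hv
  have hbadmeas : ∀ a : ℕ, MeasurableSet (bad a) := by
    intro a
    have hrw : bad a = ⋃ k ∈ Finset.Icc 1 m, {ω | ENNReal.ofReal (1 / δa a) ≤
        ∏ i ∈ Finset.univ.filter (fun i : Fin m => (i : ℕ) < k), q a (perm i) ω} := by
      ext ω
      simp [hbaddef, Set.mem_iUnion]
    rw [hrw]
    refine Set.Finite.measurableSet_biUnion (Finset.Icc 1 m).finite_toSet (fun k _ => ?_)
    exact measurableSet_le measurable_const
      (Finset.measurable_prod _ (fun i _ => hqmeas a (perm i)))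
  set badU : Set Ω := ⋃ a : {n : ℕ // 1 ≤ n}, bad (a : ℕ) with hbadU
  have hUmeas : MeasurableSet badU := MeasurableSet.iUnion fun a => hbadmeas a
  have hUbound : ℙ badU ≤ ENNReal.ofReal δ := by
    calc ℙ badU ≤ ∑' a : {n : ℕ // 1 ≤ n}, ℙ (bad (a : ℕ)) := measure_iUnion_le _
      _ ≤ ∑' a : {n : ℕ // 1 ≤ n}, ENNReal.ofReal (δa (a : ℕ)) :=
          ENNReal.tsum_le_tsum (fun a => hbad (a : ℕ) a.2)
      _ = ENNReal.ofReal δ := by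
          rw [← KRU_basel hδ0]
  -- the complement of badU is contained in the good event
  have hsubset : badUᶜ ⊆ {ω | ∀ k ∈ Finset.Icc 1 m,
      FDP H0 ((Finset.univ.filter
          (fun i : Fin m => (i : ℕ) < k ∧ p (perm i) ω ≤ s)).image perm) ≤
        min 1 (⨅ a : {n : ℕ // 1 ≤ n},
          KRconstPre δ B (a : ℕ)
            * (((a : ℕ) : ℝ) + B * ((Finset.univ.filter
                  (fun i : Fin m => (i : ℕ) < k ∧ lam < p (perm i) ω)).card : ℝ))
            / ((max 1 ((Finset.univ.filter
                  (fun i : Fin m => (i : ℕ) < k ∧ p (perm i) ω ≤ s)).card) : ℕ) : ℝ))} := by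
    intro ω hω
    intro k hk
    have hnb : ∀ a : ℕ, 1 ≤ a →
        ∏ i ∈ Finset.univ.filter (fun i : Fin m => (i : ℕ) < k), q a (perm i) ω
          < ENNReal.ofReal (1 / δa a) := by
      intro a ha
      have hmem : ω ∉ bad a := fun hc => hω (Set.mem_iUnion.2 ⟨⟨a, ha⟩, hc⟩)
      rw [hbaddef] at hmem
      simp only [Set.mem_setOf_eq, not_exists] at hmem
      push_neg at hmem
      exact hmem k hk
    set F' : Finset (Fin m) :=
      Finset.univ.filter (fun i : Fin m => (i : ℕ) < k ∧ p (perm i) ω ≤ s) with hF'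
    set R : Finset (Fin m) := F'.image perm with hR
    set cnt : ℕ := F'.card with hcnt
    set Nk : ℕ := (Finset.univ.filter
      (fun i : Fin m => (i : ℕ) < k ∧ lam < p (perm i) ω)).card with hNk
    set V : ℕ := (Finset.univ.filter
      (fun i : Fin m => (i : ℕ) < k ∧ (perm i ∈ H0 ∧ p (perm i) ω ≤ s))).card with hV
    set N0 : ℕ := (Finset.univ.filter
      (fun i : Fin m => (i : ℕ) < k ∧ (perm i ∈ H0 ∧ lam < p (perm i) ω))).card with hN0
    -- the numerator of FDP is V
    have hinter : R ∩ H0 = (Finset.univ.filter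
        (fun i : Fin m => (i : ℕ) < k ∧ (perm i ∈ H0 ∧ p (perm i) ω ≤ s))).image perm := by
      ext j
      simp only [hR, hF', Finset.mem_inter, Finset.mem_image, Finset.mem_filter,
        Finset.mem_univ, true_and]
      constructor
      · rintro ⟨⟨i, ⟨hik, hps⟩, rfl⟩, hH⟩
        exact ⟨i, ⟨hik, hH, hps⟩, rfl⟩
      · rintro ⟨i, ⟨hik, hH, hps⟩, rfl⟩
        exact ⟨⟨i, ⟨hik, hps⟩, rfl⟩, hH⟩
    have hnum : (R ∩ H0).card = V := by
      rw [hinter, hV, Finset.card_image_of_injective _ perm.injective]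
    have hcardR : R.card = cnt := by
      rw [hR, hcnt, Finset.card_image_of_injective _ perm.injective]
    have hDval : ((max R.card 1 : ℕ) : ℝ) = ((max 1 cnt : ℕ) : ℝ) := by
      rw [hcardR, max_comm]
    have hDpos : (0:ℝ) < ((max 1 cnt : ℕ) : ℝ) := by
      have : 1 ≤ max 1 cnt := le_max_left 1 cnt
      exact_mod_cast Nat.lt_of_lt_of_le Nat.zero_lt_one this
    refine le_min ?_ (le_ciInf ?_)
    · -- FDP ≤ 1
      rw [FDP]
      apply div_le_one_of_le₀
      · have h1 : (R ∩ H0).card ≤ max R.card 1 :=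
          le_trans (Finset.card_le_card Finset.inter_subset_left) (le_max_left _ _)
        exact_mod_cast h1
      · exact Nat.cast_nonneg _
    · rintro ⟨a, ha⟩
      have haR : (1:ℝ) ≤ (a:ℝ) := hacast a ha
      have haR0 : (0:ℝ) < (a:ℝ) := by linarith
      -- product formula
      have hfactor : ∀ i : Fin m, q a (perm i) ω =
          (ENNReal.ofReal (x a)) ^ (if perm i ∈ H0 ∧ p (perm i) ω ≤ s then 1 else 0)
          * (ENNReal.ofReal (ν a)) ^ (if perm i ∈ H0 ∧ lam < p (perm i) ω then 1 else 0) := by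
        intro i
        by_cases h1 : perm i ∈ H0 ∧ p (perm i) ω ≤ s
        · have h2 : ¬(perm i ∈ H0 ∧ lam < p (perm i) ω) :=
            fun hc => absurd h1.2 (not_le.2 (lt_of_le_of_lt hsl hc.2))
          rw [if_pos h1, if_neg h2, pow_one, pow_zero, mul_one]
          simp only [hq, hg, if_pos h1.1, if_pos h1.2]
        · by_cases h2 : perm i ∈ H0 ∧ lam < p (perm i) ω
          · have hps : ¬ p (perm i) ω ≤ s := not_le.2 (lt_of_le_of_lt hsl h2.2)
            rw [if_neg h1, if_pos h2, pow_zero, pow_one, one_mul]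
            simp only [hq, hg, if_pos h2.1, if_neg hps, if_pos h2.2]
          · rw [if_neg h1, if_neg h2, pow_zero, pow_zero, mul_one]
            by_cases hj : perm i ∈ H0
            · have hps : ¬ p (perm i) ω ≤ s := fun hc => h1 ⟨hj, hc⟩
              have hpl : ¬ lam < p (perm i) ω := fun hc => h2 ⟨hj, hc⟩
              simp only [hq, hg, if_pos hj, if_neg hps, if_neg hpl, ENNReal.ofReal_one]
            · simp only [hq, if_neg hj]
      have hMform : ∏ i ∈ Finset.univ.filter (fun i : Fin m => (i : ℕ) < k), q a (perm i) ω
          = ENNReal.ofReal (x a ^ V * ν a ^ N0) := by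
        rw [Finset.prod_congr rfl (fun i _ => hfactor i), Finset.prod_mul_distrib,
          Finset.prod_pow_eq_pow_sum, Finset.prod_pow_eq_pow_sum]
        have hsum1 : ∑ i ∈ Finset.univ.filter (fun i : Fin m => (i : ℕ) < k),
            (if perm i ∈ H0 ∧ p (perm i) ω ≤ s then 1 else 0) = V := by
          rw [Finset.sum_boole, hV, Finset.filter_filter]
          simp
        have hsum2 : ∑ i ∈ Finset.univ.filter (fun i : Fin m => (i : ℕ) < k),
            (if perm i ∈ H0 ∧ lam < p (perm i) ω then 1 else 0) = N0 := by
          rw [Finset.sum_boole, hN0, Finset.filter_filter]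
          simp
        rw [hsum1, hsum2, ← ENNReal.ofReal_pow (by have := hx1 a ha; linarith),
          ← ENNReal.ofReal_pow (hν0 a ha).le,
          ← ENNReal.ofReal_mul (pow_nonneg (by have := hx1 a ha; linarith) V)]
      -- real inequality
      have hlt : x a ^ V * ν a ^ N0 < 1 / δa a := by
        have h := hnb a ha
        rw [hMform] at h
        exact (ENNReal.ofReal_lt_ofReal_iff (one_div_pos.2 (hδa0 a ha))).1 h
      set L : ℝ := Real.log (1 / δa a) with hL
      have hLpos : 0 < L := Real.log_pos (hinvgt a ha)
      set θ : ℝ := Real.log (x a) with hθ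
      have hθpos : 0 < θ := Real.log_pos (hx1 a ha)
      have hxpos : (0:ℝ) < x a := by have := hx1 a ha; linarith
      have hlog : (V : ℝ) * θ + (N0 : ℝ) * Real.log (ν a) < L := by
        have hpos : (0:ℝ) < x a ^ V * ν a ^ N0 :=
          mul_pos (pow_pos hxpos V) (pow_pos (hν0 a ha) N0)
        have h := Real.log_lt_log hpos hlt
        rwa [Real.log_mul (ne_of_gt (pow_pos hxpos V)) (ne_of_gt (pow_pos (hν0 a ha) N0)),
          Real.log_pow, Real.log_pow] at h
      have hlogν : Real.log (ν a) = -(B / (a : ℝ)) * L := by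
        rw [hν]
        simp only []
        rw [Real.log_rpow (hδa0 a ha), hL, one_div, Real.log_inv]
        ring
      have hKR : KRconstPre δ B a = L / ((a : ℝ) * θ) := rfl
      have hcpos : 0 < KRconstPre δ B a := by
        rw [hKR]
        exact div_pos hLpos (mul_pos haR0 hθpos)
      have hVle : (V : ℝ) ≤ KRconstPre δ B a * ((a : ℝ) + B * (N0 : ℝ)) := by
        rw [hKR]
        rw [div_mul_eq_mul_div, le_div_iff₀ (mul_pos haR0 hθpos)]
        have h1 : (V : ℝ) * θ < L * (1 + B / (a : ℝ) * (N0 : ℝ)) := by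
          rw [hlogν] at hlog
          nlinarith [hlog]
        have h2 : L * ((1 + B / (a : ℝ) * (N0 : ℝ)) * (a : ℝ))
            = L * ((a : ℝ) + B * (N0 : ℝ)) := by
          field_simp
        calc (V : ℝ) * ((a : ℝ) * θ) = ((V : ℝ) * θ) * (a : ℝ) := by ring
          _ ≤ (L * (1 + B / (a : ℝ) * (N0 : ℝ))) * (a : ℝ) :=
              mul_le_mul_of_nonneg_right h1.le haR0.le
          _ = L * ((1 + B / (a : ℝ) * (N0 : ℝ)) * (a : ℝ)) := by ring
          _ = L * ((a : ℝ) + B * (N0 : ℝ)) := h2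
      have hN0Nk : (N0 : ℝ) ≤ (Nk : ℝ) := by
        have hsub : (Finset.univ.filter
            (fun i : Fin m => (i : ℕ) < k ∧ (perm i ∈ H0 ∧ lam < p (perm i) ω)))
            ⊆ (Finset.univ.filter (fun i : Fin m => (i : ℕ) < k ∧ lam < p (perm i) ω)) := by
          apply Finset.monotone_filter_right
          intro i _ h
          exact ⟨h.1, h.2.2⟩
        exact_mod_cast Finset.card_le_card hsub
      have hVle2 : (V : ℝ) ≤ KRconstPre δ B a * ((a : ℝ) + B * (Nk : ℝ)) := by
        refine hVle.trans (mul_le_mul_of_nonneg_left ?_ hcpos.le)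
        nlinarith [hBpos, hN0Nk]
      -- conclude
      show FDP H0 R ≤ KRconstPre δ B a * ((a : ℝ) + B * (Nk : ℝ)) / ((max 1 cnt : ℕ) : ℝ)
      rw [FDP]
      have hnumR : ((R ∩ H0).card : ℝ) = (V : ℝ) := by exact_mod_cast hnum
      rw [hnumR, hDval]
      gcongr
  have htr : ((1:ℝ≥0∞) - ENNReal.ofReal δ).toReal = 1 - δ := by
    rw [ENNReal.toReal_sub_of_le (ENNReal.ofReal_le_one.2 hδ1.le) ENNReal.one_ne_top,
      ENNReal.toReal_one, ENNReal.toReal_ofReal hδ0.le]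
  refine le_trans (le_of_eq htr.symm) (ENNReal.toReal_mono (measure_ne_top _ _) ?_)
  calc (1:ℝ≥0∞) - ENNReal.ofReal δ ≤ 1 - ℙ badU := tsub_le_tsub_left hUbound 1
    _ = ℙ badUᶜ := (prob_compl_eq_one_sub hUmeas).symm
    _ ≤ _ := measure_mono hsubset
end

section
/- Uniform Hoeffding bound for Bernoulli sums (Lemma A.2): Let X_i ~ Bernoulli(p_i), 1 ≤ i ≤ m, be independent Bernoulli random variables with parameters p_i ∈ [0,1]. Then for every real a ≥ 1 and every integer m ≥ a: P( sup_{a ≤ k ≤ m} | k^{-1} Σ_{i=1}^k (X_i − p_i) | ≥ a^{−1/4} ) ≤ (2 + a^{1/2}) e^{−2 a^{1/2}}, where the supremum is over integers k with a ≤ k ≤ m. -/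
open MeasureTheory ProbabilityTheory Real Set

open Real

lemma bern_D_pos (p : ℝ) (hp0 : 0 ≤ p) (hp1 : p ≤ 1) (s : ℝ) :
    0 < 1 - p + p * Real.exp s := by
  rcases le_or_gt (Real.exp s) 1 with h | h
  · nlinarith [Real.exp_pos s, mul_nonneg hp0 (Real.exp_pos s).le]
  · nlinarith [Real.exp_pos s]

lemma bern_mgf_le (p t : ℝ) (hp0 : 0 ≤ p) (hp1 : p ≤ 1) :
    (1 - p) * Real.exp (t * (0 - p)) + p * Real.exp (t * (1 - p)) ≤ Real.exp (t ^ 2 / 8) := by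
  set D : ℝ → ℝ := fun s => 1 - p + p * Real.exp s with hDdef
  have hDs : ∀ s, D s = 1 - p + p * Real.exp s := fun s => rfl
  have hD : ∀ s, 0 < D s := bern_D_pos p hp0 hp1
  have hDd : ∀ s, HasDerivAt D (p * Real.exp s) s := by
    intro s
    have h := (hasDerivAt_const s (1 - p)).add ((Real.hasDerivAt_exp s).const_mul p)
    rw [zero_add] at h
    exact h
  set φ : ℝ → ℝ := fun s => s ^ 2 / 8 + s * p - Real.log (D s) with hφdef
  set ψ : ℝ → ℝ := fun s => s / 4 + p - p * Real.exp s / D s with hψdef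
  have hφs : ∀ s, φ s = s ^ 2 / 8 + s * p - Real.log (D s) := fun s => rfl
  have hψs : ∀ s, ψ s = s / 4 + p - p * Real.exp s / D s := fun s => rfl
  have hφd : ∀ s, HasDerivAt φ (ψ s) s := by
    intro s
    have h1 : HasDerivAt (fun s : ℝ => s ^ 2 / 8 + s * p) (s / 4 + p) s := by
      have := ((hasDerivAt_pow 2 s).div_const 8).add ((hasDerivAt_id s).mul_const p)
      exact this.congr_deriv (by ring)
    have h2 : HasDerivAt (fun s => Real.log (D s)) (p * Real.exp s / D s) s :=
      (hDd s).log (hD s).ne'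
    exact h1.sub h2
  have hψd : ∀ s, HasDerivAt ψ (1 / 4 - p * (1 - p) * Real.exp s / (D s) ^ 2) s := by
    intro s
    have h1 : HasDerivAt (fun s : ℝ => s / 4 + p) (1 / 4) s := by
      simpa using ((hasDerivAt_id s).div_const 4).add_const p
    have h2 : HasDerivAt (fun s => p * Real.exp s / D s)
        ((p * Real.exp s * D s - p * Real.exp s * (p * Real.exp s)) / (D s) ^ 2) s :=
      ((Real.hasDerivAt_exp s).const_mul p).div (hDd s) (hD s).ne'
    have h3 := h1.sub h2
    refine h3.congr_deriv ?_
    have hne := (hD s).ne'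
    rw [hDs s] at hne ⊢
    field_simp
    ring
  have hψmono : Monotone ψ := by
    refine monotone_of_deriv_nonneg (fun s => (hψd s).differentiableAt) (fun s => ?_)
    rw [(hψd s).deriv]
    have h4 : p * (1 - p) * Real.exp s / (D s) ^ 2 ≤ 1 / 4 := by
      rw [div_le_iff₀ (pow_pos (hD s) 2), hDs s]
      nlinarith [Real.exp_pos s, sq_nonneg (1 - p - p * Real.exp s)]
    linarith
  have hψ0 : ψ 0 = 0 := by
    rw [hψs 0, hDs 0]
    norm_num
  have hφ0 : φ 0 = 0 := by
    rw [hφs 0, hDs 0]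
    norm_num
  have hφt : 0 ≤ φ t := by
    rcases le_total 0 t with ht | ht
    · have hmono : MonotoneOn φ (Set.Ici (0:ℝ)) := by
        refine monotoneOn_of_deriv_nonneg (convex_Ici 0)
          ((Differentiable.continuous (fun s => (hφd s).differentiableAt)).continuousOn) ?_ ?_
        · intro s _
          exact (hφd s).differentiableAt.differentiableWithinAt
        · intro s hs
          rw [(hφd s).deriv]
          have h := hψmono (le_of_lt (show (0:ℝ) < s by simpa using hs))
          rw [hψ0] at h
          exact h
      have h2 := hmono Set.self_mem_Ici (Set.mem_Ici.2 ht) ht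
      rw [hφ0] at h2
      exact h2
    · have hanti : AntitoneOn φ (Set.Iic (0:ℝ)) := by
        refine antitoneOn_of_deriv_nonpos (convex_Iic 0)
          ((Differentiable.continuous (fun s => (hφd s).differentiableAt)).continuousOn) ?_ ?_
        · intro s _
          exact (hφd s).differentiableAt.differentiableWithinAt
        · intro s hs
          rw [(hφd s).deriv]
          have h := hψmono (le_of_lt (show s < (0:ℝ) by simpa using hs))
          rw [hψ0] at h
          exact h
      have h2 := hanti (Set.mem_Iic.2 ht) Set.self_mem_Iic ht
      rw [hφ0] at h2
      exact h2
  have hlog : Real.log (D t) ≤ t ^ 2 / 8 + t * p := by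
    rw [hφs t] at hφt; linarith
  have hDle : D t ≤ Real.exp (t ^ 2 / 8 + t * p) :=
    (Real.log_le_iff_le_exp (hD t)).1 hlog
  have key : (1 - p) * Real.exp (t * (0 - p)) + p * Real.exp (t * (1 - p))
      = Real.exp (-(t * p)) * D t := by
    rw [hDs t, mul_add]
    rw [show t * (0 - p) = -(t*p) by ring, show t * (1 - p) = t + -(t*p) by ring,
      Real.exp_add]
    ring
  rw [key]
  calc Real.exp (-(t*p)) * D t ≤ Real.exp (-(t*p)) * Real.exp (t ^ 2 / 8 + t * p) :=
        mul_le_mul_of_nonneg_left hDle (Real.exp_pos _).le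
    _ = Real.exp (t ^ 2 / 8) := by rw [← Real.exp_add]; ring_nf


open MeasureTheory ProbabilityTheory Real Set

section helpers

lemma geom_tail_le {r : ℝ} (hr0 : 0 ≤ r) (hr1 : r < 1) (K M : ℕ) :
    ∑ k ∈ Finset.Icc K M, r ^ k ≤ r ^ K * (1 - r)⁻¹ := by
  rw [← Finset.Ico_add_one_right_eq_Icc, Finset.sum_Ico_eq_sum_range]
  simp_rw [pow_add, ← Finset.mul_sum]
  have h1 : (0:ℝ) < 1 - r := by linarith
  have h2 : ∑ i ∈ Finset.range (M + 1 - K), r ^ i ≤ (1 - r)⁻¹ := by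
    rw [geom_sum_eq (by linarith : r ≠ 1)]
    rw [div_le_iff_of_neg (by linarith : r - 1 < 0)]
    have he : (1 - r)⁻¹ * (r - 1) = -1 := by field_simp; ring
    rw [he]
    linarith [pow_nonneg hr0 (M + 1 - K)]
  exact mul_le_mul_of_nonneg_left h2 (pow_nonneg hr0 K)

end helpers

/-- Uniform Hoeffding bound for Bernoulli sums (Lemma A.2). -/
theorem uniform_hoeffding_bernoulli
    {Ω : Type*} [MeasureSpace Ω] [IsProbabilityMeasure (ℙ : Measure Ω)]
    (m : ℕ) (X : ℕ → Ω → ℝ) (prob : ℕ → ℝ)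
    (hprob : ∀ i, prob i ∈ Set.Icc (0:ℝ) 1)
    (hXval : ∀ i ω, X i ω = 0 ∨ X i ω = 1)
    (hXmeas : ∀ i, Measurable (X i))
    (hindep : iIndepFun
      (fun i : Fin m => fun ω => X ((i : ℕ) + 1) ω) ℙ)
    (hlaw : ∀ i ∈ Finset.Icc 1 m, (ℙ {ω | X i ω = 1}).toReal = prob i)
    (a : ℝ) (ha : 1 ≤ a) (hma : a ≤ m) :
    (ℙ {ω | ∃ k : ℕ, a ≤ k ∧ k ≤ m ∧
        a ^ (-(1:ℝ)/4) ≤ |(k : ℝ)⁻¹ * ∑ i ∈ Finset.Icc 1 k, (X i ω - prob i)|}).toReal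
      ≤ (2 + Real.sqrt a) * Real.exp (-2 * Real.sqrt a) := by
  have ha0 : (0:ℝ) < a := lt_of_lt_of_le one_pos ha
  set b : ℝ := a ^ (-(1:ℝ)/4) with hbdef
  have hb0 : 0 < b := Real.rpow_pos_of_pos ha0 _
  -- basic facts about the Bernoulli variables
  have hset : ∀ i, MeasurableSet {ω : Ω | X i ω = 1} := fun i =>
    (hXmeas i) (measurableSet_singleton 1)
  have hXind : ∀ i, X i = Set.indicator {ω : Ω | X i ω = 1} (fun _ => (1:ℝ)) := by
    intro i; funext ω
    rcases hXval i ω with h | h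
    · rw [h, Set.indicator_of_notMem]
      simp only [Set.mem_setOf_eq, h]
      norm_num
    · rw [h]
      exact (Set.indicator_of_mem (show ω ∈ {ω : Ω | X i ω = 1} from h)
        (fun _ => (1:ℝ))).symm
  have hXint : ∀ i, Integrable (X i) ℙ := fun i => by
    rw [hXind i]; exact (integrable_const 1).indicator (hset i)
  have hXintegral : ∀ i ∈ Finset.Icc 1 m, ∫ ω, X i ω ∂ℙ = prob i := by
    intro i hi
    rw [hXind i, integral_indicator_const _ (hset i), measureReal_def, hlaw i hi]
    simp
  -- mgf facts for individual summands
  have hExpEq : ∀ (i : ℕ) (t : ℝ), (fun ω => Real.exp (t * (X i ω - prob i)))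
      = (fun ω => Real.exp (t * (0 - prob i))
          + (Real.exp (t * (1 - prob i)) - Real.exp (t * (0 - prob i))) * X i ω) := by
    intro i t; funext ω
    rcases hXval i ω with h | h <;> rw [h] <;> ring
  have hint : ∀ (i : ℕ) (t : ℝ),
      Integrable (fun ω => Real.exp (t * (X i ω - prob i))) ℙ := by
    intro i t
    rw [hExpEq i t]
    exact (integrable_const _).add ((hXint i).const_mul _)
  have hmgf_le : ∀ (t : ℝ), ∀ i ∈ Finset.Icc 1 m,
      mgf (fun ω => X i ω - prob i) ℙ t ≤ Real.exp (t ^ 2 / 8) := by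
    intro t i hi
    have heq : mgf (fun ω => X i ω - prob i) ℙ t
        = (1 - prob i) * Real.exp (t * (0 - prob i))
          + prob i * Real.exp (t * (1 - prob i)) := by
      rw [mgf, hExpEq i t, integral_add (integrable_const _) ((hXint i).const_mul _),
        integral_const, integral_const_mul, hXintegral i hi]
      simp only [measure_univ, probReal_univ, ENNReal.toReal_one, smul_eq_mul, one_mul]
      ring
    rw [heq]
    exact bern_mgf_le (prob i) t (hprob i).1 (hprob i).2
  -- independence of centered variables
  set Y : Fin m → Ω → ℝ := fun j ω => X ((j:ℕ) + 1) ω - prob ((j:ℕ) + 1) with hYdef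
  have hYmeas : ∀ j, Measurable (Y j) := fun j => (hXmeas _).sub measurable_const
  have hYindep : iIndepFun Y ℙ :=
    hindep.comp (fun j (x : ℝ) => x - prob ((j:ℕ) + 1))
      (fun j => measurable_id.sub measurable_const)
  set sk : ℕ → Finset (Fin m) := fun k => Finset.univ.filter (fun j : Fin m => (j:ℕ) < k)
    with hskdef
  have hsum : ∀ k, k ≤ m → ∀ ω : Ω,
      (∑ j ∈ sk k, Y j) ω = ∑ i ∈ Finset.Icc 1 k, (X i ω - prob i) := by
    intro k hkm ω
    rw [Finset.sum_apply]
    refine Finset.sum_bij' (fun (j : Fin m) (_ : j ∈ sk k) => (j:ℕ) + 1)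
      (fun i hi => (⟨i - 1, by simp only [Finset.mem_Icc] at hi; omega⟩ : Fin m))
      ?_ ?_ ?_ ?_ ?_
    · intro j hj
      simp only [hskdef, Finset.mem_filter, Finset.mem_univ, true_and] at hj
      simp only [Finset.mem_Icc]
      omega
    · intro i hi
      simp only [Finset.mem_Icc] at hi
      simp only [hskdef, Finset.mem_filter, Finset.mem_univ, true_and]
      omega
    · intro j hj
      exact Fin.ext (by simp)
    · intro i hi
      simp only [Finset.mem_Icc] at hi
      simp only
      omega
    · intro j hj
      rfl
  have hcard : ∀ k, k ≤ m → (sk k).card = k := by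
    intro k hk
    have : (sk k).card = (Finset.range k).card := by
      refine Finset.card_bij' (fun (j : Fin m) (_ : j ∈ sk k) => (j:ℕ))
        (fun i hi => (⟨i, by simp only [Finset.mem_range] at hi; omega⟩ : Fin m))
        ?_ ?_ ?_ ?_
      · intro j hj
        simp only [hskdef, Finset.mem_filter, Finset.mem_univ, true_and] at hj
        simp only [Finset.mem_range]
        omega
      · intro i hi
        simp only [Finset.mem_range] at hi
        simp only [hskdef, Finset.mem_filter, Finset.mem_univ, true_and]
        omega
      · intro j hj
        exact Fin.ext (by simp)
      · intro i hi
        simp only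
    rw [this, Finset.card_range]
  -- per-k tail bound
  have tail : ∀ k : ℕ, 1 ≤ k → k ≤ m →
      (ℙ {ω : Ω | (k:ℝ) * b ≤ ∑ i ∈ Finset.Icc 1 k, (X i ω - prob i)}).toReal
        + (ℙ {ω : Ω | ∑ i ∈ Finset.Icc 1 k, (X i ω - prob i) ≤ -((k:ℝ) * b)}).toReal
      ≤ 2 * Real.exp ((k:ℝ) * -(2 * b ^ 2)) := by
    intro k hk1 hkm
    have hmgfS : ∀ t : ℝ, mgf (∑ j ∈ sk k, Y j) ℙ t ≤ Real.exp ((k:ℝ) * (t ^ 2 / 8)) := by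
      intro t
      rw [hYindep.mgf_sum hYmeas (sk k)]
      calc ∏ j ∈ sk k, mgf (Y j) ℙ t ≤ ∏ _j ∈ sk k, Real.exp (t ^ 2 / 8) := by
            refine Finset.prod_le_prod (fun j _ => mgf_nonneg) (fun j hj => ?_)
            exact hmgf_le t ((j:ℕ) + 1) (Finset.mem_Icc.2 ⟨by omega, by omega⟩)
        _ = Real.exp ((k:ℝ) * (t ^ 2 / 8)) := by
            rw [Finset.prod_const, hcard k hkm, ← Real.exp_nat_mul]
    have hintS : ∀ t : ℝ, Integrable (fun ω => Real.exp (t * (∑ j ∈ sk k, Y j) ω)) ℙ :=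
      fun t => hYindep.integrable_exp_mul_sum hYmeas (fun j _ => hint _ t)
    have hup : (ℙ {ω : Ω | (k:ℝ) * b ≤ ∑ i ∈ Finset.Icc 1 k, (X i ω - prob i)}).toReal
        ≤ Real.exp ((k:ℝ) * -(2 * b ^ 2)) := by
      have hA : {ω : Ω | (k:ℝ) * b ≤ ∑ i ∈ Finset.Icc 1 k, (X i ω - prob i)}
          = {ω : Ω | (k:ℝ) * b ≤ (∑ j ∈ sk k, Y j) ω} := by
        ext ω; simp only [Set.mem_setOf_eq, hsum k hkm ω]
      rw [hA]
      calc (ℙ {ω : Ω | (k:ℝ) * b ≤ (∑ j ∈ sk k, Y j) ω}).toReal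
          ≤ Real.exp (-(4 * b) * ((k:ℝ) * b)) * mgf (∑ j ∈ sk k, Y j) ℙ (4 * b) :=
            measure_ge_le_exp_mul_mgf ((k:ℝ) * b) (by positivity) (hintS (4 * b))
        _ ≤ Real.exp (-(4 * b) * ((k:ℝ) * b)) * Real.exp ((k:ℝ) * ((4 * b) ^ 2 / 8)) :=
            mul_le_mul_of_nonneg_left (hmgfS (4 * b)) (Real.exp_pos _).le
        _ = Real.exp ((k:ℝ) * -(2 * b ^ 2)) := by
            rw [← Real.exp_add]; congr 1; ring
    have hdown : (ℙ {ω : Ω | ∑ i ∈ Finset.Icc 1 k, (X i ω - prob i) ≤ -((k:ℝ) * b)}).toReal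
        ≤ Real.exp ((k:ℝ) * -(2 * b ^ 2)) := by
      have hB : {ω : Ω | ∑ i ∈ Finset.Icc 1 k, (X i ω - prob i) ≤ -((k:ℝ) * b)}
          = {ω : Ω | (∑ j ∈ sk k, Y j) ω ≤ -((k:ℝ) * b)} := by
        ext ω; simp only [Set.mem_setOf_eq, hsum k hkm ω]
      rw [hB]
      calc (ℙ {ω : Ω | (∑ j ∈ sk k, Y j) ω ≤ -((k:ℝ) * b)}).toReal
          ≤ Real.exp (-(-(4 * b)) * -((k:ℝ) * b)) * mgf (∑ j ∈ sk k, Y j) ℙ (-(4 * b)) :=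
            measure_le_le_exp_mul_mgf (-((k:ℝ) * b)) (by linarith) (hintS (-(4 * b)))
        _ ≤ Real.exp (-(-(4 * b)) * -((k:ℝ) * b)) * Real.exp ((k:ℝ) * ((-(4 * b)) ^ 2 / 8)) :=
            mul_le_mul_of_nonneg_left (hmgfS (-(4 * b))) (Real.exp_pos _).le
        _ = Real.exp ((k:ℝ) * -(2 * b ^ 2)) := by
            rw [← Real.exp_add]; congr 1; ring
    linarith
  -- union bound and geometric series
  set K : ℕ := ⌈a⌉₊ with hKdef
  set r : ℝ := Real.exp (-(2 * b ^ 2)) with hrdef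
  have hr0 : 0 < r := Real.exp_pos _
  have hr1 : r < 1 := by
    rw [hrdef, Real.exp_lt_one_iff]
    nlinarith
  set A : ℕ → Set Ω :=
    fun k => {ω : Ω | (k:ℝ) * b ≤ ∑ i ∈ Finset.Icc 1 k, (X i ω - prob i)} with hAdef
  set B : ℕ → Set Ω :=
    fun k => {ω : Ω | ∑ i ∈ Finset.Icc 1 k, (X i ω - prob i) ≤ -((k:ℝ) * b)} with hBdef
  have hsub : {ω : Ω | ∃ k : ℕ, a ≤ k ∧ k ≤ m ∧
        b ≤ |(k : ℝ)⁻¹ * ∑ i ∈ Finset.Icc 1 k, (X i ω - prob i)|}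
      ⊆ ⋃ k ∈ Finset.Icc K m, (A k ∪ B k) := by
    intro ω hω
    obtain ⟨k, hak, hkm, habs⟩ := hω
    have hk0 : (0:ℝ) < k := lt_of_lt_of_le ha0 hak
    refine Set.mem_biUnion (Finset.mem_Icc.2 ⟨Nat.ceil_le.2 hak, hkm⟩) ?_
    have habs' : (k:ℝ) * b ≤ |∑ i ∈ Finset.Icc 1 k, (X i ω - prob i)| := by
      rw [abs_mul, abs_inv, abs_of_pos hk0] at habs
      have h2 := mul_le_mul_of_nonneg_left habs hk0.le
      calc (k:ℝ) * b ≤ (k:ℝ) * ((k:ℝ)⁻¹ * |∑ i ∈ Finset.Icc 1 k, (X i ω - prob i)|) := h2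
        _ = |∑ i ∈ Finset.Icc 1 k, (X i ω - prob i)| := by
            field_simp
    rcases le_abs.1 habs' with h | h
    · exact Or.inl h
    · exact Or.inr (by simp only [hBdef, Set.mem_setOf_eq]; linarith)
  calc (ℙ {ω : Ω | ∃ k : ℕ, a ≤ k ∧ k ≤ m ∧
        b ≤ |(k : ℝ)⁻¹ * ∑ i ∈ Finset.Icc 1 k, (X i ω - prob i)|}).toReal
      ≤ (ℙ (⋃ k ∈ Finset.Icc K m, (A k ∪ B k))).toReal :=
        ENNReal.toReal_mono (measure_ne_top _ _) (measure_mono hsub)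
    _ ≤ (∑ k ∈ Finset.Icc K m, ℙ (A k ∪ B k)).toReal := by
        refine ENNReal.toReal_mono ?_ (measure_biUnion_finset_le _ _)
        exact (ENNReal.sum_lt_top.2 fun _ _ => measure_lt_top _ _).ne
    _ = ∑ k ∈ Finset.Icc K m, (ℙ (A k ∪ B k)).toReal :=
        ENNReal.toReal_sum (fun _ _ => measure_ne_top _ _)
    _ ≤ ∑ k ∈ Finset.Icc K m, 2 * r ^ k := by
        refine Finset.sum_le_sum (fun k hk => ?_)
        obtain ⟨hKk, hkm⟩ := Finset.mem_Icc.1 hk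
        have hk1 : 1 ≤ k := le_trans (Nat.one_le_ceil_iff.2 ha0) hKk
        have h2 := tail k hk1 hkm
        have hrk : Real.exp ((k:ℝ) * -(2 * b ^ 2)) = r ^ k := by
          rw [hrdef, ← Real.exp_nat_mul]
        calc (ℙ (A k ∪ B k)).toReal ≤ ((ℙ (A k)) + (ℙ (B k))).toReal :=
              ENNReal.toReal_mono
                (ENNReal.add_ne_top.2 ⟨measure_ne_top _ _, measure_ne_top _ _⟩)
                (measure_union_le _ _)
          _ = (ℙ (A k)).toReal + (ℙ (B k)).toReal :=
              ENNReal.toReal_add (measure_ne_top _ _) (measure_ne_top _ _)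
          _ ≤ 2 * Real.exp ((k:ℝ) * -(2 * b ^ 2)) := h2
          _ = 2 * r ^ k := by rw [hrk]
    _ = 2 * ∑ k ∈ Finset.Icc K m, r ^ k := by rw [Finset.mul_sum]
    _ ≤ 2 * (r ^ K * (1 - r)⁻¹) :=
        mul_le_mul_of_nonneg_left (geom_tail_le hr0.le hr1 K m) (by norm_num)
    _ ≤ (2 + Real.sqrt a) * Real.exp (-2 * Real.sqrt a) := by
        have hu : 0 < Real.sqrt a := Real.sqrt_pos.2 ha0
        have hb2 : b ^ 2 = (Real.sqrt a)⁻¹ := by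
          rw [hbdef, ← Real.rpow_natCast (a ^ (-(1:ℝ)/4)) 2, ← Real.rpow_mul ha0.le]
          rw [show (-(1:ℝ)/4) * ((2:ℕ):ℝ) = -(1/2) by push_cast; ring]
          rw [Real.rpow_neg ha0.le, ← Real.sqrt_eq_rpow]
        have hKa : a ≤ (K:ℝ) := Nat.le_ceil a
        have hrK : r ^ K ≤ Real.exp (-2 * Real.sqrt a) := by
          rw [hrdef, ← Real.exp_nat_mul, Real.exp_le_exp, hb2]
          have hdiv : a / Real.sqrt a ≤ (K:ℝ) / Real.sqrt a := by gcongr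
          rw [Real.div_sqrt] at hdiv
          rw [div_eq_mul_inv] at hdiv
          nlinarith
        have hfrac : 2 * (1 - r)⁻¹ ≤ 2 + Real.sqrt a := by
          have hx : 0 < 2 * b ^ 2 := by positivity
          have hrle : r ≤ (2 * b ^ 2 + 1)⁻¹ := by
            rw [hrdef, Real.exp_neg]
            exact inv_anti₀ (by linarith) (by linarith [Real.add_one_le_exp (2 * b ^ 2)])
          have h1r : 0 < 1 - r := by linarith
          rw [show 2 * (1 - r)⁻¹ = 2 / (1 - r) from (div_eq_mul_inv 2 (1-r)).symm]
          rw [div_le_iff₀ h1r]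
          have key : (2 + Real.sqrt a) * (1 - (2 * b ^ 2 + 1)⁻¹) = 2 := by
            rw [hb2]
            have h1 : (2 * (Real.sqrt a)⁻¹ + 1) = (2 + Real.sqrt a) / Real.sqrt a := by
              field_simp
            rw [h1]
            field_simp
            ring
          have hmul : 0 ≤ (2 + Real.sqrt a) * ((2 * b ^ 2 + 1)⁻¹ - r) :=
            mul_nonneg (by linarith) (by linarith)
          nlinarith
        calc 2 * (r ^ K * (1 - r)⁻¹) = (2 * (1 - r)⁻¹) * r ^ K := by ring
          _ ≤ (2 + Real.sqrt a) * Real.exp (-2 * Real.sqrt a) :=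
              mul_le_mul hfrac hrK (pow_nonneg hr0.le K) (by positivity)
end

section
/- Properties of the function h (Lemma D.1): The function h(λ) = λ(log λ − 1) + 1 is increasing and strictly convex from (1,∞) onto (0,∞), and its inverse h^{-1} is increasing and strictly concave from (0,∞) onto (1,∞). Moreover: (a) for all λ > 1, 2(√λ − 1)² ≤ h(λ) ≤ (λ − 1)²/2; (b) for all y > 0, 1 + √(2y) ≤ h^{-1}(y) ≤ (1 + √(y/2))²; (c) for every c > 0, the map x ↦ x · h^{-1}(c/x) is increasing on (1, +∞). -/
open Real Set

/-- The function `h(λ) = λ(log λ - 1) + 1`. -/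
noncomputable def hfun (x : ℝ) : ℝ := x * (Real.log x - 1) + 1

lemma hfun_hasDerivAt {x : ℝ} (hx : x ≠ 0) : HasDerivAt hfun (Real.log x) x := by
  have h := ((hasDerivAt_id x).mul ((Real.hasDerivAt_log hx).sub_const 1)).add_const 1
  refine h.congr_deriv ?_
  field_simp
  simp only [id]
  ring

lemma hfun_contOn (s : Set ℝ) (hs : ∀ x ∈ s, x ≠ 0) : ContinuousOn hfun s :=
  fun x hx => (hfun_hasDerivAt (hs x hx)).continuousAt.continuousWithinAt

lemma hfun_mono_Ici : StrictMonoOn hfun (Set.Ici 1) := by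
  apply strictMonoOn_of_deriv_pos (convex_Ici 1)
    (hfun_contOn _ (fun x hx => by exact ne_of_gt (lt_of_lt_of_le one_pos hx)))
  intro x hx
  rw [interior_Ici] at hx
  rw [(hfun_hasDerivAt (ne_of_gt (lt_trans one_pos hx))).deriv]
  exact Real.log_pos hx

lemma hfun_one : hfun 1 = 0 := by simp [hfun]

lemma hfun_pos {x : ℝ} (hx : 1 < x) : 0 < hfun x := by
  have := hfun_mono_Ici (Set.self_mem_Ici) (Set.mem_Ici.mpr hx.le) hx
  rwa [hfun_one] at this

lemma hfun_convex : StrictConvexOn ℝ (Set.Ioi 1) hfun := by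
  apply StrictMonoOn.strictConvexOn_of_deriv (convex_Ioi 1)
    (hfun_contOn _ (fun x hx => by exact ne_of_gt (lt_trans one_pos hx)))
  intro a ha b hb hab
  rw [interior_Ioi] at ha hb
  rw [(hfun_hasDerivAt (ne_of_gt (lt_trans one_pos ha))).deriv,
    (hfun_hasDerivAt (ne_of_gt (lt_trans one_pos hb))).deriv]
  exact Real.log_lt_log (lt_trans one_pos ha) hab

lemma hfun_upper {l : ℝ} (hl : 1 < l) : hfun l ≤ (l - 1) ^ 2 / 2 := by
  set G : ℝ → ℝ := fun x => (x - 1) ^ 2 / 2 - hfun x with hG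
  have hd : ∀ x ∈ Set.Ioi (1:ℝ), HasDerivAt G ((x - 1) - Real.log x) x := by
    intro x hx
    have h1 : HasDerivAt (fun x : ℝ => (x - 1) ^ 2 / 2) (x - 1) x := by
      have := (((hasDerivAt_id x).sub_const 1).pow 2).div_const 2
      refine this.congr_deriv ?_
      norm_num
    exact h1.sub (hfun_hasDerivAt (ne_of_gt (lt_trans one_pos hx)))
  have hmono : MonotoneOn G (Set.Ici 1) := by
    apply monotoneOn_of_deriv_nonneg (convex_Ici 1)
    · exact ContinuousOn.sub (by fun_prop)
        (hfun_contOn _ (fun x hx => ne_of_gt (lt_of_lt_of_le one_pos hx)))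
    · intro x hx
      rw [interior_Ici] at hx
      exact ((hd x hx).differentiableAt).differentiableWithinAt
    · intro x hx
      rw [interior_Ici] at hx
      rw [(hd x hx).deriv]
      have := Real.log_le_sub_one_of_pos (lt_trans one_pos hx)
      linarith
  have h01 : G 1 = 0 := by simp [G, hfun]
  have := hmono Set.self_mem_Ici (Set.mem_Ici.mpr hl.le) hl.le
  rw [h01] at this
  simp only [G] at this
  linarith

lemma log_ge_one_sub_inv {t : ℝ} (ht : 0 < t) : 1 - t⁻¹ ≤ Real.log t := by
  have h := Real.log_le_sub_one_of_pos (inv_pos.mpr ht)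
  rw [Real.log_inv] at h
  linarith

lemma hfun_lower {l : ℝ} (hl : 1 < l) : 2 * (Real.sqrt l - 1) ^ 2 ≤ hfun l := by
  set F : ℝ → ℝ := fun x => hfun x - 2 * (Real.sqrt x - 1) ^ 2 with hF
  have hd : ∀ x ∈ Set.Ioi (1:ℝ),
      HasDerivAt F (Real.log x - 2 * ((Real.sqrt x - 1) / Real.sqrt x)) x := by
    intro x hx
    have hx0 : (0:ℝ) < x := lt_trans one_pos hx
    have hs : (0:ℝ) < Real.sqrt x := Real.sqrt_pos.mpr hx0
    have h1 : HasDerivAt (fun x : ℝ => 2 * (Real.sqrt x - 1) ^ 2)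
        (2 * ((Real.sqrt x - 1) / Real.sqrt x)) x := by
      have := (((Real.hasDerivAt_sqrt hx0.ne').sub_const 1).pow 2).const_mul 2
      refine this.congr_deriv ?_
      field_simp
      ring
    exact (hfun_hasDerivAt hx0.ne').sub h1
  have hmono : MonotoneOn F (Set.Ici 1) := by
    apply monotoneOn_of_deriv_nonneg (convex_Ici 1)
    · exact ContinuousOn.sub
        (hfun_contOn _ (fun x hx => ne_of_gt (lt_of_lt_of_le one_pos hx))) (by fun_prop)
    · intro x hx
      rw [interior_Ici] at hx
      exact ((hd x hx).differentiableAt).differentiableWithinAt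
    · intro x hx
      rw [interior_Ici] at hx
      rw [(hd x hx).deriv]
      have hx0 : (0:ℝ) < x := lt_trans one_pos hx
      have hs : (0:ℝ) < Real.sqrt x := Real.sqrt_pos.mpr hx0
      have h2 : 1 - (Real.sqrt x)⁻¹ ≤ Real.log (Real.sqrt x) := log_ge_one_sub_inv hs
      have h3 : Real.log (Real.sqrt x) = Real.log x / 2 := Real.log_sqrt hx0.le
      have h4 : (Real.sqrt x - 1) / Real.sqrt x = 1 - (Real.sqrt x)⁻¹ := by
        field_simp
      rw [h4]
      rw [h3] at h2
      linarith
  have h01 : F 1 = 0 := by simp [F, hfun]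
  have := hmono Set.self_mem_Ici (Set.mem_Ici.mpr hl.le) hl.le
  rw [h01] at this
  simp only [F] at this
  linarith

/-- Properties of the function `h` (Lemma D.1). -/
theorem hfun_properties (hinv : ℝ → ℝ)
    (hhinv : ∀ y ∈ Set.Ioi (0:ℝ), hinv y ∈ Set.Ioi (1:ℝ) ∧ hfun (hinv y) = y) :
    -- h is increasing and strictly convex from (1,∞) onto (0,∞)
    StrictMonoOn hfun (Set.Ioi 1) ∧
    StrictConvexOn ℝ (Set.Ioi 1) hfun ∧
    hfun '' Set.Ioi 1 = Set.Ioi 0 ∧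
    -- h⁻¹ is increasing and strictly concave from (0,∞) onto (1,∞)
    StrictMonoOn hinv (Set.Ioi 0) ∧
    StrictConcaveOn ℝ (Set.Ioi 0) hinv ∧
    hinv '' Set.Ioi 0 = Set.Ioi 1 ∧
    -- (a) bounds on h
    (∀ l : ℝ, 1 < l → 2 * (Real.sqrt l - 1) ^ 2 ≤ hfun l ∧ hfun l ≤ (l - 1) ^ 2 / 2) ∧
    -- (b) bounds on h⁻¹
    (∀ y : ℝ, 0 < y → 1 + Real.sqrt (2 * y) ≤ hinv y ∧ hinv y ≤ (1 + Real.sqrt (y / 2)) ^ 2) ∧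
    -- (c) x ↦ x h⁻¹(c/x) is increasing on (1,∞)
    (∀ c : ℝ, 0 < c → StrictMonoOn (fun x => x * hinv (c / x)) (Set.Ioi 1)) := by
  have hmono : StrictMonoOn hfun (Set.Ioi 1) := hfun_mono_Ici.mono (Set.Ioi_subset_Ici le_rfl)
  have hinj : Set.InjOn hfun (Set.Ioi 1) := hmono.injOn
  have hinvmono : StrictMonoOn hinv (Set.Ioi 0) := by
    intro y1 h1 y2 h2 hlt
    have a1 := hhinv y1 h1; have a2 := hhinv y2 h2
    have : hfun (hinv y1) < hfun (hinv y2) := by rw [a1.2, a2.2]; exact hlt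
    exact (hmono.lt_iff_lt a1.1 a2.1).mp this
  have hconc : StrictConcaveOn ℝ (Set.Ioi 0) hinv := by
    refine ⟨convex_Ioi 0, ?_⟩
    intro y1 h1 y2 h2 hne a b ha hb hab
    have a1 := hhinv y1 h1; have a2 := hhinv y2 h2
    have hy1p : (0:ℝ) < y1 := h1
    have hy2p : (0:ℝ) < y2 := h2
    have hz : a * y1 + b * y2 ∈ Set.Ioi (0:ℝ) := by
      simp only [Set.mem_Ioi]; positivity
    have az := hhinv _ hz
    have hxne : hinv y1 ≠ hinv y2 := by
      intro h
      exact hne (by rw [← a1.2, ← a2.2, h])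
    have hcomb : a * hinv y1 + b * hinv y2 ∈ Set.Ioi (1:ℝ) := by
      have := (convex_Ioi (1:ℝ)) a1.1 a2.1 ha.le hb.le hab
      simpa using this
    have hcv := hfun_convex.2 a1.1 a2.1 hxne ha hb hab
    simp only [smul_eq_mul] at hcv ⊢
    rw [a1.2, a2.2, ← az.2] at hcv
    exact (hmono.lt_iff_lt hcomb az.1).mp hcv
  have himg : hfun '' Set.Ioi 1 = Set.Ioi 0 := by
    ext y; constructor
    · rintro ⟨x, hx, rfl⟩; exact hfun_pos hx
    · intro hy; exact ⟨hinv y, (hhinv y hy).1, (hhinv y hy).2⟩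
  have hinvimg : hinv '' Set.Ioi 0 = Set.Ioi 1 := by
    ext x; constructor
    · rintro ⟨y, hy, rfl⟩; exact (hhinv y hy).1
    · intro hx
      have hy : hfun x ∈ Set.Ioi (0:ℝ) := hfun_pos hx
      exact ⟨hfun x, hy, hinj (hhinv _ hy).1 hx (hhinv _ hy).2⟩
  have hB : ∀ y : ℝ, 0 < y →
      1 + Real.sqrt (2 * y) ≤ hinv y ∧ hinv y ≤ (1 + Real.sqrt (y / 2)) ^ 2 := by
    intro y hy
    obtain ⟨hx1, hxe⟩ := hhinv y hy
    set x := hinv y with hxdef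
    have hx1' : (1:ℝ) < x := hx1
    have hlo := hfun_lower hx1'
    have hhi := hfun_upper hx1'
    rw [hxe] at hlo hhi
    constructor
    · have h2y : 2 * y ≤ (x - 1) ^ 2 := by linarith
      have h := Real.sqrt_le_sqrt h2y
      rw [Real.sqrt_sq (by linarith : (0:ℝ) ≤ x - 1)] at h
      linarith
    · have h1 : (Real.sqrt x - 1) ^ 2 ≤ y / 2 := by linarith
      have hsx : (1:ℝ) ≤ Real.sqrt x := by
        rw [show (1:ℝ) = Real.sqrt 1 by simp]
        exact Real.sqrt_le_sqrt hx1'.le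
      have h2 := Real.sqrt_le_sqrt h1
      rw [Real.sqrt_sq (by linarith)] at h2
      have h3 : Real.sqrt x ≤ 1 + Real.sqrt (y / 2) := by linarith
      calc x = Real.sqrt x ^ 2 := (Real.sq_sqrt (by linarith : (0:ℝ) ≤ x)).symm
        _ ≤ (1 + Real.sqrt (y / 2)) ^ 2 := pow_le_pow_left₀ (Real.sqrt_nonneg x) h3 2
  have key : ∀ y2 y1 : ℝ, 0 < y2 → y2 < y1 → y2 * hinv y1 < y1 * hinv y2 := by
    intro y2 y1 hy2 hlt
    have hy1 : 0 < y1 := hy2.trans hlt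
    have hg1 : hinv y2 < hinv y1 := hinvmono (Set.mem_Ioi.mpr hy2) (Set.mem_Ioi.mpr hy1) hlt
    have hd : 0 < hinv y1 - hinv y2 := by linarith
    set ε : ℝ := min (y2 / 2) ((y1 - y2) / (2 * (hinv y1 - hinv y2))) with hεdef
    have hεpos : 0 < ε := lt_min (by linarith) (div_pos (by linarith) (by linarith))
    have hεy2 : ε < y2 := lt_of_le_of_lt (min_le_left _ _) (by linarith)
    have hεsmall : ε * (hinv y1 - hinv y2) < y1 - y2 := by
      have h1 : ε ≤ (y1 - y2) / (2 * (hinv y1 - hinv y2)) := min_le_right _ _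
      have h2 := mul_le_mul_of_nonneg_right h1 hd.le
      have h3 : (y1 - y2) / (2 * (hinv y1 - hinv y2)) * (hinv y1 - hinv y2)
          = (y1 - y2) / 2 := by
        field_simp
      rw [h3] at h2
      linarith
    have hεmem : ε ∈ Set.Ioi (0:ℝ) := hεpos
    have hy1mem : y1 ∈ Set.Ioi (0:ℝ) := hy1
    have hεne : ε ≠ y1 := by linarith
    set t : ℝ := (y2 - ε) / (y1 - ε) with htdef
    have hden : 0 < y1 - ε := by linarith
    have ht : 0 < t := div_pos (by linarith) hden
    have h1t : 0 < 1 - t := by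
      have : t < 1 := (div_lt_one hden).mpr (by linarith)
      linarith
    have hsum : (1 - t) + t = 1 := by ring
    have hcc := hconc.2 hεmem hy1mem hεne h1t ht hsum
    simp only [smul_eq_mul] at hcc
    have hcomb : (1 - t) * ε + t * y1 = y2 := by
      rw [htdef]
      field_simp
      ring
    rw [hcomb] at hcc
    have hgε : 1 < hinv ε := (hhinv ε hεpos).1
    have h5 : (1 - t) + t * hinv y1 < hinv y2 := by nlinarith
    have hm := mul_lt_mul_of_pos_left h5 hden
    have hexp : (y1 - ε) * ((1 - t) + t * hinv y1) = (y1 - y2) + (y2 - ε) * hinv y1 := by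
      rw [htdef]
      field_simp
      ring
    rw [hexp] at hm
    nlinarith
  have hC : ∀ c : ℝ, 0 < c → StrictMonoOn (fun x => x * hinv (c / x)) (Set.Ioi 1) := by
    intro c hc x1 hx1 x2 hx2 hlt
    have hx1' : (1:ℝ) < x1 := hx1
    have hx2' : (1:ℝ) < x2 := hx2
    have hx1p : (0:ℝ) < x1 := by linarith
    have hx2p : (0:ℝ) < x2 := by linarith
    have hy2 : 0 < c / x2 := by positivity
    have hylt : c / x2 < c / x1 := div_lt_div_of_pos_left hc hx1p hlt
    have hk := key (c / x2) (c / x1) hy2 hylt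
    simp only
    have e1 : x1 * hinv (c / x1) = (x1 * x2 / c) * ((c / x2) * hinv (c / x1)) := by
      field_simp
    have e2 : x2 * hinv (c / x2) = (x1 * x2 / c) * ((c / x1) * hinv (c / x2)) := by
      field_simp
    rw [e1, e2]
    exact mul_lt_mul_of_pos_left hk (by positivity)
  exact ⟨hmono, hfun_convex, himg, hinvmono, hconc, hinvimg,
    fun l hl => ⟨hfun_lower hl, hfun_upper hl⟩, hB, hC⟩
end
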